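/- Let (G, p) be a finite critical net in ℝ^k satisfying the balance condition. Let (v_1, …, v_k) be an orthonormal basis of EuclideanSpace ℝ (Fin k) such that for each i, every edge {x,y} of G with both endpoints interior satisfies ⟪p y − p x, v_i⟫ ≠ 0. For each i let D_i ∈ ℕ be such that every sequence x_0, x_1, …, x_m of interior vertices with x_j adjacent to x_{j+1} and ⟪p x_{j+1} − p x_j, v_i⟫ > 0 for all 0 ≤ j < m satisfies m ≤ D_i. Then the sum of the degrees of the interior vertices satisfies ∑_{x interior} deg_G(x) ≤ 2 |∂X| + (∑_{i=1}^k D_i²)^{1/2} · |∂X|. -/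
import Mathlib


open scoped RealInnerProductSpace

/-- Auxiliary: the length of the longest chain (bounded by `Dlim`) of vertices
satisfying `P`, with consecutive steps related by `R`, ending at `x`. -/
noncomputable def chainSup {V : Type*} (P : V → Prop) (R : V → V → Prop)
    (Dlim : ℕ) (x : V) : ℕ :=
  sSup {m | m ≤ Dlim ∧ ∃ c : ℕ → V, c m = x ∧ (∀ j ≤ m, P (c j)) ∧
    ∀ j < m, R (c j) (c (j + 1))}

theorem chainSup_le {V : Type*} (P : V → Prop) (R : V → V → Prop) (Dlim : ℕ) (x : V) :
    chainSup P R Dlim x ≤ Dlim := by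
  by_cases hne : {m | m ≤ Dlim ∧ ∃ c : ℕ → V, c m = x ∧ (∀ j ≤ m, P (c j)) ∧
      ∀ j < m, R (c j) (c (j + 1))}.Nonempty
  · exact csSup_le hne fun m hm => hm.1
  · simp [chainSup, Set.not_nonempty_iff_eq_empty.1 hne]

theorem chainSup_mem {V : Type*} {P : V → Prop} {R : V → V → Prop} {Dlim : ℕ} {x : V}
    (hx : P x) :
    chainSup P R Dlim x ∈ {m | m ≤ Dlim ∧ ∃ c : ℕ → V, c m = x ∧ (∀ j ≤ m, P (c j)) ∧
      ∀ j < m, R (c j) (c (j + 1))} := by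
  apply Nat.sSup_mem
  · exact ⟨0, Nat.zero_le _, fun _ => x, rfl, fun j _ => hx, fun j hj => absurd hj (Nat.not_lt_zero j)⟩
  · exact ⟨Dlim, fun m hm => hm.1⟩

theorem chainSup_step {V : Type*} {P : V → Prop} {R : V → V → Prop} {Dlim : ℕ} {x y : V}
    (hx : P x) (hy : P y) (hxy : R x y)
    (hbound : ∀ (m : ℕ) (c : ℕ → V), (∀ j ≤ m, P (c j)) →
      (∀ j < m, R (c j) (c (j + 1))) → m ≤ Dlim) :
    chainSup P R Dlim x + 1 ≤ chainSup P R Dlim y := by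
  obtain ⟨hm, c, hcx, hcP, hcR⟩ := chainSup_mem (P := P) (R := R) (Dlim := Dlim) hx
  set m := chainSup P R Dlim x with hmdef
  set c' : ℕ → V := fun j => if j ≤ m then c j else y with hc'
  have hc'P : ∀ j ≤ m + 1, P (c' j) := by
    intro j hj
    by_cases hjm : j ≤ m
    · simpa [hc', hjm] using hcP j hjm
    · simpa [hc', hjm] using hy
  have hc'R : ∀ j < m + 1, R (c' j) (c' (j + 1)) := by
    intro j hj
    rcases Nat.lt_succ_iff_lt_or_eq.1 hj with hjm | rfl
    · have h1 : j ≤ m := le_of_lt hjm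
      have h2 : j + 1 ≤ m := hjm
      simpa [hc', h1, h2] using hcR j hjm
    · have h1 : ¬ (m + 1 ≤ m) := by omega
      simpa [hc', le_refl, h1, hcx] using hxy
  have hDm : m + 1 ≤ Dlim := hbound (m + 1) c' hc'P hc'R
  apply le_csSup ⟨Dlim, fun n hn => hn.1⟩
  refine ⟨hDm, c', ?_, hc'P, hc'R⟩
  simp [hc']

set_option maxHeartbeats 1000000 in
/-- Let `(G, p)` be a finite critical net in `ℝ^k` satisfying the
balance condition, and let `v` be an orthonormal basis such that no edge between two
interior vertices is perpendicular to any `v i`.  If `D i` bounds the length of every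
path of interior vertices whose successive edges have positive inner product with
`v i`, then the sum of the degrees of the interior vertices is at most
`2|∂X| + (∑ D_i²)^{1/2} |∂X|`. -/
theorem sum_interior_degrees_le
    {k : ℕ} (hk : 1 ≤ k) {V : Type*} [Fintype V] [DecidableEq V]
    (G : SimpleGraph V) [DecidableRel G.Adj]
    (p : V → EuclideanSpace ℝ (Fin k)) (hinj : Function.Injective p)
    (hdeg1 : ∀ x : V, 1 ≤ G.degree x)
    (hnoLL : ∀ x y : V, G.Adj x y → ¬(G.degree x = 1 ∧ G.degree y = 1))
    (hbal : ∀ x : V, 2 ≤ G.degree x →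
      ∑ y ∈ G.neighborFinset x, (‖p x - p y‖)⁻¹ • (p x - p y) = 0)
    (v : OrthonormalBasis (Fin k) ℝ (EuclideanSpace ℝ (Fin k)))
    (hv : ∀ i : Fin k, ∀ x y : V, G.Adj x y → 2 ≤ G.degree x → 2 ≤ G.degree y →
      ⟪p y - p x, v i⟫ ≠ 0)
    (D : Fin k → ℕ)
    (hD : ∀ i : Fin k, ∀ m : ℕ, ∀ c : ℕ → V,
      (∀ j ≤ m, 2 ≤ G.degree (c j)) →
      (∀ j < m, G.Adj (c j) (c (j + 1)) ∧ 0 < ⟪p (c (j + 1)) - p (c j), v i⟫) →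
      m ≤ D i) :
    ((∑ x ∈ Finset.univ.filter (fun x : V => 2 ≤ G.degree x), G.degree x : ℕ) : ℝ)
      ≤ 2 * (Finset.univ.filter fun l : V => G.degree l = 1).card
        + Real.sqrt (∑ i : Fin k, (D i : ℝ) ^ 2)
          * (Finset.univ.filter fun l : V => G.degree l = 1).card := by
  classical
  set I : Finset V := Finset.univ.filter (fun x : V => 2 ≤ G.degree x) with hIdef
  set B : Finset V := Finset.univ.filter (fun l : V => G.degree l = 1) with hBdef
  have hmemI : ∀ x : V, x ∈ I ↔ 2 ≤ G.degree x := by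
    intro x; simp [hIdef]
  have hmemB : ∀ x : V, x ∈ B ↔ G.degree x = 1 := by
    intro x; simp [hBdef]
  -- the "height" functions
  set P : V → Prop := fun z => 2 ≤ G.degree z with hPdef
  set R : Fin k → V → V → Prop :=
    fun i a b => G.Adj a b ∧ 0 < ⟪p b - p a, v i⟫ with hRdef
  set h : Fin k → V → ℕ := fun i x => chainSup P (R i) (D i) x with hhdef
  have hle : ∀ i x, h i x ≤ D i := fun i x => chainSup_le P (R i) (D i) x
  have hstep : ∀ i x y, P x → P y → R i x y → h i x + 1 ≤ h i y := by
    intro i x y hx hy hxy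
    exact chainSup_step hx hy hxy (fun m c h1 h2 => hD i m c h1 h2)
  -- the potential
  set ψ : V → EuclideanSpace ℝ (Fin k) :=
    fun x => ∑ i, (((h i x : ℝ)) - (D i : ℝ) / 2) • v i with hψdef
  set Q : ℝ := Real.sqrt (∑ i : Fin k, (D i : ℝ) ^ 2) with hQdef
  have hQ0 : 0 ≤ Q := Real.sqrt_nonneg _
  -- norm bound on ψ
  have hψnorm : ∀ x : V, ‖ψ x‖ ≤ Q / 2 := by
    intro x
    have hsq : ‖ψ x‖ ^ 2 = ∑ i, (((h i x : ℝ)) - (D i : ℝ) / 2) ^ 2 := by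
      rw [← real_inner_self_eq_norm_sq, hψdef]
      rw [v.orthonormal.inner_sum (fun i => ((h i x : ℝ)) - (D i : ℝ) / 2)
        (fun i => ((h i x : ℝ)) - (D i : ℝ) / 2)]
      simp [sq]
    have hbd : ∑ i, (((h i x : ℝ)) - (D i : ℝ) / 2) ^ 2
        ≤ (∑ i : Fin k, (D i : ℝ) ^ 2) / 4 := by
      rw [Finset.sum_div]
      apply Finset.sum_le_sum
      intro i _
      have h0 : (0 : ℝ) ≤ (h i x : ℝ) := Nat.cast_nonneg _
      have h1 : (h i x : ℝ) ≤ (D i : ℝ) := Nat.cast_le.2 (hle i x)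
      nlinarith
    have : ‖ψ x‖ ^ 2 ≤ (∑ i : Fin k, (D i : ℝ) ^ 2) / 4 := hsq ▸ hbd
    have h2 : ‖ψ x‖ ≤ Real.sqrt ((∑ i : Fin k, (D i : ℝ) ^ 2) / 4) := by
      have := Real.sqrt_le_sqrt this
      rwa [Real.sqrt_sq (norm_nonneg _)] at this
    have h4 : Real.sqrt ((∑ i : Fin k, (D i : ℝ) ^ 2) / 4) = Q / 2 := by
      have hs4 : Real.sqrt 4 = 2 := by
        rw [show ((4:ℝ)) = 2 ^ 2 by norm_num, Real.sqrt_sq (by norm_num : (0:ℝ) ≤ 2)]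
      rw [hQdef, Real.sqrt_div (by positivity) 4, hs4]
    rwa [h4] at h2
  -- the per-edge inequality
  have hpair : ∀ x y : V, 2 ≤ G.degree x → 2 ≤ G.degree y → G.Adj x y →
      1 ≤ ⟪ψ x - ψ y, (‖p x - p y‖)⁻¹ • (p x - p y)⟫ := by
    intro x y hx hy hxy
    set z : EuclideanSpace ℝ (Fin k) := p x - p y with hzdef
    have hzne : z ≠ 0 := by
      intro hz
      exact hxy.ne (hinj (by rwa [sub_eq_zero] at hz))
    have hn : 0 < ‖z‖ := norm_pos_iff.2 hzne
    set w : EuclideanSpace ℝ (Fin k) := (‖z‖)⁻¹ • z with hwdef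
    have hwnorm : ‖w‖ = 1 := by
      rw [hwdef, norm_smul, norm_inv, norm_norm, inv_mul_cancel₀ hn.ne']
    -- expand the inner product
    have hexp : ⟪ψ x - ψ y, w⟫
        = ∑ i, (((h i x : ℝ)) - ((h i y : ℝ))) * ⟪v i, w⟫ := by
      have : ψ x - ψ y = ∑ i, ((((h i x : ℝ)) - ((h i y : ℝ)))) • v i := by
        rw [hψdef, ← Finset.sum_sub_distrib]
        congr 1; funext i; rw [← sub_smul]; ring_nf
      rw [this, sum_inner]
      congr 1; funext i
      rw [real_inner_smul_left]
    -- Parseval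
    have hpar : ∑ i, ⟪v i, w⟫ ^ 2 = 1 := by
      have := v.sum_inner_mul_inner w w
      have h2 : ∀ i : Fin k, ⟪w, v i⟫ * ⟪v i, w⟫ = ⟪v i, w⟫ ^ 2 := by
        intro i; rw [real_inner_comm w (v i), sq]
      rw [Finset.sum_congr rfl (fun i _ => h2 i)] at this
      rw [this, real_inner_self_eq_norm_sq, hwnorm]; norm_num
    -- termwise
    have hterm : ∀ i : Fin k, ⟪v i, w⟫ ^ 2 ≤ (((h i x : ℝ)) - ((h i y : ℝ))) * ⟪v i, w⟫ := by
      intro i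
      have hwin : ⟪v i, w⟫ = (‖z‖)⁻¹ * ⟪v i, z⟫ := by
        rw [hwdef, real_inner_smul_right]
      have habs : |⟪v i, w⟫| ≤ 1 := by
        calc |⟪v i, w⟫| ≤ ‖v i‖ * ‖w‖ := abs_real_inner_le_norm _ _
        _ = 1 := by rw [v.orthonormal.1 i, hwnorm, one_mul]
      have hane : ⟪v i, z⟫ ≠ 0 := by
        have := hv i x y hxy hx hy
        intro hcontra
        apply this
        have : ⟪v i, p y - p x⟫ = 0 := by
          rw [show p y - p x = -z by rw [hzdef]; abel, inner_neg_right, hcontra, neg_zero]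
        rw [real_inner_comm] at this
        exact this
      rcases lt_or_gt_of_ne hane with hneg | hpos
      · -- ⟪v i, z⟫ < 0 : y is above x in direction i, so h i y ≥ h i x + 1
        have hR : R i x y := by
          refine ⟨hxy, ?_⟩
          have : ⟪v i, p y - p x⟫ = -⟪v i, z⟫ := by
            rw [show p y - p x = -z by rw [hzdef]; abel, inner_neg_right]
          rw [real_inner_comm] at this
          rw [this]; linarith
        have hstep' := hstep i x y hx hy hR
        have hc : (((h i x : ℝ)) - ((h i y : ℝ))) ≤ -1 := by
          have : (h i x : ℝ) + 1 ≤ (h i y : ℝ) := by exact_mod_cast hstep'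
          linarith
        have hw0 : ⟪v i, w⟫ < 0 := by
          rw [hwin]
          exact mul_neg_of_pos_of_neg (inv_pos.2 hn) hneg
        nlinarith [abs_le.1 habs]
      · -- ⟪v i, z⟫ > 0 : x is above y in direction i
        have hR : R i y x := by
          refine ⟨hxy.symm, ?_⟩
          have : ⟪p x - p y, v i⟫ = ⟪v i, z⟫ := by
            rw [hzdef, real_inner_comm]
          rw [this]; exact hpos
        have hstep' := hstep i y x hy hx hR
        have hc : (1 : ℝ) ≤ (((h i x : ℝ)) - ((h i y : ℝ))) := by
          have : (h i y : ℝ) + 1 ≤ (h i x : ℝ) := by exact_mod_cast hstep'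
          linarith
        have hw0 : 0 < ⟪v i, w⟫ := by
          rw [hwin]
          exact mul_pos (inv_pos.2 hn) hpos
        nlinarith [abs_le.1 habs]
    calc (1 : ℝ) = ∑ i, ⟪v i, w⟫ ^ 2 := hpar.symm
      _ ≤ ∑ i, (((h i x : ℝ)) - ((h i y : ℝ))) * ⟪v i, w⟫ :=
          Finset.sum_le_sum fun i _ => hterm i
      _ = ⟪ψ x - ψ y, w⟫ := hexp.symm
  -- neighbour decomposition
  set NI : V → Finset V := fun x => (G.neighborFinset x).filter (fun z => 2 ≤ G.degree z)
    with hNIdef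
  set NB : V → Finset V := fun x => (G.neighborFinset x).filter (fun z => G.degree z = 1)
    with hNBdef
  have hmemNI : ∀ x y : V, y ∈ NI x ↔ G.Adj x y ∧ 2 ≤ G.degree y := by
    intro x y
    simp [hNIdef]
  have hmemNB : ∀ x y : V, y ∈ NB x ↔ G.Adj x y ∧ G.degree y = 1 := by
    intro x y
    simp [hNBdef]
  have hnotdeg : ∀ z : V, ¬ 2 ≤ G.degree z ↔ G.degree z = 1 := by
    intro z; have := hdeg1 z; omega
  have hNBalt : ∀ x : V,
      NB x = (G.neighborFinset x).filter (fun z => ¬ 2 ≤ G.degree z) := by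
    intro x
    simp only [hNBdef]
    apply Finset.filter_congr
    intro z _
    simp [hnotdeg z]
  have hcardsplit : ∀ x : V, G.degree x = (NI x).card + (NB x).card := by
    intro x
    rw [hNBalt x]
    simp only [hNIdef]
    rw [Finset.card_filter_add_card_filter_not,
      SimpleGraph.card_neighborFinset_eq_degree]
  -- the balance rearrangement
  have hbal2 : ∀ x ∈ I, ∑ y ∈ NI x, (‖p x - p y‖)⁻¹ • (p x - p y)
      = - ∑ y ∈ NB x, (‖p x - p y‖)⁻¹ • (p x - p y) := by
    intro x hx
    have hb := hbal x ((hmemI x).1 hx)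
    have hsplit : ∑ y ∈ NI x, (‖p x - p y‖)⁻¹ • (p x - p y)
        + ∑ y ∈ NB x, (‖p x - p y‖)⁻¹ • (p x - p y)
        = ∑ y ∈ G.neighborFinset x, (‖p x - p y‖)⁻¹ • (p x - p y) := by
      rw [hNBalt x]
      simp only [hNIdef]
      rw [Finset.sum_filter_add_sum_filter_not]
    rw [hb] at hsplit
    exact eq_neg_of_add_eq_zero_left hsplit
  -- the sum S
  set f : V → V → ℝ := fun x y => ⟪ψ x, (‖p x - p y‖)⁻¹ • (p x - p y)⟫ with hfdef
  have hf : ∀ x y : V, f x y = ⟪ψ x, (‖p x - p y‖)⁻¹ • (p x - p y)⟫ := fun _ _ => rfl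
  set S : ℝ := ∑ x ∈ I, ∑ y ∈ NI x, f x y with hSdef
  -- symmetry of the index set
  have hsym : ∀ x y : V, x ∈ I ∧ y ∈ NI x ↔ x ∈ NI y ∧ y ∈ I := by
    intro x y
    rw [hmemI y, hmemI x, hmemNI x y, hmemNI y x]
    constructor
    · rintro ⟨hx, hxy, hy⟩; exact ⟨⟨hxy.symm, hx⟩, hy⟩
    · rintro ⟨⟨hyx, hx⟩, hy⟩; exact ⟨hx, hyx.symm, hy⟩
  have hswap : (∑ x ∈ I, ∑ y ∈ NI x, f x y) = ∑ x ∈ I, ∑ y ∈ NI x, f y x :=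
    Finset.sum_comm' (fun x y => hsym x y)
  -- antisymmetry of the unit edge vectors
  have hanti : ∀ x y : V, f x y + f y x
      = ⟪ψ x - ψ y, (‖p x - p y‖)⁻¹ • (p x - p y)⟫ := by
    intro x y
    rw [hf x y, hf y x]
    have h1 : p y - p x = -(p x - p y) := by abel
    have h2 : ‖p y - p x‖ = ‖p x - p y‖ := norm_sub_rev _ _
    rw [h2, h1, smul_neg, inner_neg_right, inner_sub_left]
    ring
  -- lower bound for 2S
  have hlower : (∑ x ∈ I, ((NI x).card : ℝ)) ≤ 2 * S := by
    have h2S : 2 * S = ∑ x ∈ I, ∑ y ∈ NI x, (f x y + f y x) := by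
      have : ∑ x ∈ I, ∑ y ∈ NI x, (f x y + f y x)
          = (∑ x ∈ I, ∑ y ∈ NI x, f x y) + (∑ x ∈ I, ∑ y ∈ NI x, f y x) := by
        rw [← Finset.sum_add_distrib]
        exact Finset.sum_congr rfl fun x _ => Finset.sum_add_distrib
      rw [this, ← hswap, ← hSdef]; ring
    rw [h2S]
    apply Finset.sum_le_sum
    intro x hx
    have hcard : ((NI x).card : ℝ) = ∑ _y ∈ NI x, (1 : ℝ) := by simp
    rw [hcard]
    apply Finset.sum_le_sum
    intro y hy
    have hxy := (hmemNI x y).1 hy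
    rw [hanti x y]
    exact hpair x y ((hmemI x).1 hx) hxy.2 hxy.1
  -- upper bound for S
  have hupper : S ≤ ∑ x ∈ I, (Q / 2) * ((NB x).card : ℝ) := by
    rw [hSdef]
    apply Finset.sum_le_sum
    intro x hx
    have hinner : ∑ y ∈ NI x, f x y
        = ⟪ψ x, ∑ y ∈ NI x, (‖p x - p y‖)⁻¹ • (p x - p y)⟫ := by
      simp only [hf]
      rw [inner_sum]
    rw [hinner, hbal2 x hx]
    calc ⟪ψ x, -∑ y ∈ NB x, (‖p x - p y‖)⁻¹ • (p x - p y)⟫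
        ≤ ‖ψ x‖ * ‖-∑ y ∈ NB x, (‖p x - p y‖)⁻¹ • (p x - p y)‖ :=
          real_inner_le_norm _ _
      _ ≤ (Q / 2) * ((NB x).card : ℝ) := by
          apply mul_le_mul (hψnorm x) ?_ (norm_nonneg _) (by positivity)
          rw [norm_neg]
          calc ‖∑ y ∈ NB x, (‖p x - p y‖)⁻¹ • (p x - p y)‖
              ≤ ∑ y ∈ NB x, ‖(‖p x - p y‖)⁻¹ • (p x - p y)‖ := norm_sum_le _ _
            _ ≤ ∑ _y ∈ NB x, (1 : ℝ) := by
                apply Finset.sum_le_sum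
                intro y _
                rw [norm_smul, norm_inv, norm_norm]
                rcases eq_or_ne (‖p x - p y‖) 0 with hz | hz
                · rw [hz]; norm_num
                · rw [inv_mul_cancel₀ hz]
            _ = ((NB x).card : ℝ) := by simp
  -- leaf edge count
  have hleafcount : ∑ x ∈ I, (NB x).card = B.card := by
    have h1 : ∀ x : V, NB x = B.filter (fun l => G.Adj x l) := by
      intro x
      ext z
      rw [hmemNB x z]
      simp only [Finset.mem_filter, hmemB z]
      tauto
    have h2 : ∀ l : V, l ∈ B → I.filter (fun x => G.Adj x l) = G.neighborFinset l := by
      intro l hl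
      ext x
      simp only [Finset.mem_filter, SimpleGraph.mem_neighborFinset, hmemI x]
      constructor
      · rintro ⟨_, hxl⟩; exact hxl.symm
      · intro hlx
        refine ⟨?_, hlx.symm⟩
        have hno := hnoLL x l hlx.symm
        have hdl := (hmemB l).1 hl
        have := hdeg1 x
        omega
    calc ∑ x ∈ I, (NB x).card
        = ∑ x ∈ I, ∑ l ∈ B, if G.Adj x l then 1 else 0 := by
          refine Finset.sum_congr rfl fun x _ => ?_
          rw [h1 x, Finset.card_filter]
      _ = ∑ l ∈ B, ∑ x ∈ I, if G.Adj x l then 1 else 0 := Finset.sum_comm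
      _ = ∑ l ∈ B, (I.filter (fun x => G.Adj x l)).card := by
          refine Finset.sum_congr rfl fun l _ => ?_
          rw [Finset.card_filter]
      _ = ∑ l ∈ B, G.degree l := by
          refine Finset.sum_congr rfl fun l hl => ?_
          rw [h2 l hl, SimpleGraph.card_neighborFinset_eq_degree]
      _ = ∑ l ∈ B, 1 := by
          refine Finset.sum_congr rfl fun l hl => ?_
          rw [(hmemB l).1 hl]
      _ = B.card := by simp
  -- final assembly
  have hdegsum : ((∑ x ∈ I, G.degree x : ℕ) : ℝ)
      = (∑ x ∈ I, ((NI x).card : ℝ)) + (B.card : ℝ) := by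
    rw [← hleafcount]
    push_cast
    rw [← Finset.sum_add_distrib]
    apply Finset.sum_congr rfl
    intro x _
    rw [hcardsplit x]
    push_cast
    ring
  have hNBsum : ∑ x ∈ I, (Q / 2) * ((NB x).card : ℝ) = (Q / 2) * (B.card : ℝ) := by
    rw [← Finset.mul_sum]
    congr 1
    rw [← hleafcount]
    push_cast
    ring
  have hmain : ((∑ x ∈ I, G.degree x : ℕ) : ℝ) ≤ Q * (B.card : ℝ) + (B.card : ℝ) := by
    rw [hdegsum]
    have hQS : 2 * S ≤ Q * (B.card : ℝ) := by
      have := hupper.trans_eq hNBsum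
      linarith
    linarith
  have hB0 : (0 : ℝ) ≤ (B.card : ℝ) := Nat.cast_nonneg _
  calc ((∑ x ∈ I, G.degree x : ℕ) : ℝ) ≤ Q * (B.card : ℝ) + (B.card : ℝ) := hmain
    _ ≤ 2 * (B.card : ℝ) + Q * (B.card : ℝ) := by linarith
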